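/- Let p, p_1 be complex numbers with |p| < 1 and |p_1| < 1, and suppose p \neq p_1. Then \int_0^{2\pi} \frac{dt}{|e^{it}-p|^2 |e^{it}-p_1|^2} = 2\pi \frac{1 - |p|^2 |p_1|^2}{(1-|p|^2)(1-|p_1|^2)|1 - p \overline{p_1}|^2}. -/

import Mathlib

open Complex Metric Set

private lemma circleIntegral_add' {f g : ℂ → ℂ} {c : ℂ} {R : ℝ} (hf : CircleIntegrable f c R)
    (hg : CircleIntegrable g c R) :
    (∮ z in C(c, R), (f z + g z)) = (∮ z in C(c, R), f z) + ∮ z in C(c, R), g z := by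
  simp only [circleIntegral, smul_add, intervalIntegral.integral_add hf.out hg.out]

private lemma key_ne (a b : ℂ) (ha : ‖a‖ < 1) (hb : ‖b‖ ≤ 1) :
    1 - a * b ≠ 0 := by
  intro h
  rw [sub_eq_zero] at h
  have : ‖a * b‖ < 1 := by
    rw [norm_mul]
    nlinarith [norm_nonneg a, norm_nonneg b]
  rw [← h] at this
  simp at this

private lemma sph_ne {z w : ℂ} (hz : ‖z‖ = 1) (hw : ‖w‖ < 1) :
    z - w ≠ 0 := by
  intro h
  rw [sub_eq_zero] at h
  rw [h] at hz
  linarith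

private lemma habs2 (w : ℂ) : ((‖w‖ : ℝ) : ℂ) ^ 2 = w * (starRingEnd ℂ) w := by
  rw [← Complex.ofReal_pow, Complex.sq_norm, ← Complex.mul_conj]

private lemma split_lemma (A B CC DD p p₁ q q₁ z : ℂ) (h1 : z - p ≠ 0) (h2 : 1 - q * z ≠ 0)
    (h3 : z - p₁ ≠ 0) (h4 : 1 - q₁ * z ≠ 0) :
    A * (z - p)⁻¹ + (B * (z - p₁)⁻¹ + (CC * z + DD) / ((1 - q * z) * (1 - q₁ * z)))
      = (A * (z - p₁) * (1 - q * z) * (1 - q₁ * z)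
        + B * (z - p) * (1 - q * z) * (1 - q₁ * z)
        + (CC * z + DD) * (z - p) * (z - p₁)) /
          ((z - p) * (1 - q * z) * (z - p₁) * (1 - q₁ * z)) := by
  rw [eq_div_iff (mul_ne_zero (mul_ne_zero (mul_ne_zero h1 h2) h3) h4)]
  have ea : (z - p)⁻¹ * (z - p) = 1 := inv_mul_cancel₀ h1
  have eb : (z - p₁)⁻¹ * (z - p₁) = 1 := inv_mul_cancel₀ h3
  have ec : (CC * z + DD) / ((1 - q * z) * (1 - q₁ * z)) * ((1 - q * z) * (1 - q₁ * z))
      = CC * z + DD := div_mul_cancel₀ _ (mul_ne_zero h2 h4)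
  linear_combination A * (z - p₁) * (1 - q * z) * (1 - q₁ * z) * ea
    + B * (z - p) * (1 - q * z) * (1 - q₁ * z) * eb + (z - p) * (z - p₁) * ec

private lemma ABsum (p p₁ q q₁ : ℂ)
    (hqp : 1 - q * p ≠ 0) (hq₁p₁ : 1 - q₁ * p₁ ≠ 0) (hq₁p : 1 - q₁ * p ≠ 0)
    (hqp₁ : 1 - q * p₁ ≠ 0) (hpq₁ : 1 - p * q₁ ≠ 0) (hpq : 1 - p * q ≠ 0)
    (hp₁q₁ : 1 - p₁ * q₁ ≠ 0) (hpp₁ : p - p₁ ≠ 0) (hp₁p : p₁ - p ≠ 0) :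
    p / ((1 - q * p) * (p - p₁) * (1 - q₁ * p)) + p₁ / ((p₁ - p) * (1 - q * p₁) * (1 - q₁ * p₁))
      = (1 - p * q * (p₁ * q₁)) / ((1 - p * q) * (1 - p₁ * q₁) * ((1 - p * q₁) * (1 - q * p₁))) := by
  rw [div_add_div _ _ (mul_ne_zero (mul_ne_zero hqp hpp₁) hq₁p)
      (mul_ne_zero (mul_ne_zero hp₁p hqp₁) hq₁p₁),
    div_eq_div_iff (mul_ne_zero (mul_ne_zero (mul_ne_zero hqp hpp₁) hq₁p)
      (mul_ne_zero (mul_ne_zero hp₁p hqp₁) hq₁p₁))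
      (mul_ne_zero (mul_ne_zero hpq hp₁q₁) (mul_ne_zero hpq₁ hqp₁))]
  ring

set_option maxHeartbeats 1000000 in
theorem stmt_4 (p p₁ : ℂ) (hp : ‖p‖ < 1) (hp₁ : ‖p₁‖ < 1)
    (hne : p ≠ p₁) :
    ∫ t in (0:ℝ)..(2 * Real.pi),
        1 / ((‖Complex.exp (t * Complex.I) - p‖) ^ 2 *
             (‖Complex.exp (t * Complex.I) - p₁‖) ^ 2)
      = 2 * Real.pi * (1 - (‖p‖) ^ 2 * (‖p₁‖) ^ 2) /
          ((1 - (‖p‖) ^ 2) * (1 - (‖p₁‖) ^ 2) *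
           (‖1 - p * (starRingEnd ℂ) p₁‖) ^ 2) := by
  have hqabs : ‖(starRingEnd ℂ) p‖ < 1 := by rwa [Complex.norm_conj]
  have hq₁abs : ‖(starRingEnd ℂ) p₁‖ < 1 := by rwa [Complex.norm_conj]
  set q : ℂ := (starRingEnd ℂ) p with hq
  set q₁ : ℂ := (starRingEnd ℂ) p₁ with hq₁
  have hqp : 1 - q * p ≠ 0 := key_ne q p hqabs hp.le
  have hq₁p₁ : 1 - q₁ * p₁ ≠ 0 := key_ne q₁ p₁ hq₁abs hp₁.le
  have hq₁p : 1 - q₁ * p ≠ 0 := key_ne q₁ p hq₁abs hp.le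
  have hqp₁ : 1 - q * p₁ ≠ 0 := key_ne q p₁ hqabs hp₁.le
  have hpq₁ : 1 - p * q₁ ≠ 0 := key_ne p q₁ hp hq₁abs.le
  have hpq : 1 - p * q ≠ 0 := key_ne p q hp hqabs.le
  have hp₁q₁ : 1 - p₁ * q₁ ≠ 0 := key_ne p₁ q₁ hp₁ hq₁abs.le
  have hpp₁ : p - p₁ ≠ 0 := sub_ne_zero.mpr hne
  have hp₁p : p₁ - p ≠ 0 := sub_ne_zero.mpr (Ne.symm hne)
  set A : ℂ := p / ((1 - q * p) * (p - p₁) * (1 - q₁ * p)) with hA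
  set B : ℂ := p₁ / ((p₁ - p) * (1 - q * p₁) * (1 - q₁ * p₁)) with hB
  set CC : ℂ := -(A + B) * q * q₁ with hCC
  set DD : ℂ := 1 / ((1 - q * p) * (p - p₁) * (1 - q₁ * p))
      + 1 / ((p₁ - p) * (1 - q * p₁) * (1 - q₁ * p₁)) with hDD
  have key : ∀ z : ℂ, A * (z - p₁) * (1 - q * z) * (1 - q₁ * z)
      + B * (z - p) * (1 - q * z) * (1 - q₁ * z)
      + (CC * z + DD) * (z - p) * (z - p₁) = z := by
    intro z
    rw [hCC, hDD, hA, hB]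
    field_simp
    ring
  set g₀ : ℂ → ℂ := fun z => z / ((z - p) * (1 - q * z) * (z - p₁) * (1 - q₁ * z)) with hg₀
  set hh : ℂ → ℂ := fun z => (CC * z + DD) / ((1 - q * z) * (1 - q₁ * z)) with hhh
  have hi1 : CircleIntegrable (fun z => A * (z - p)⁻¹) 0 1 := by
    apply ContinuousOn.circleIntegrable zero_le_one
    apply ContinuousOn.mul continuousOn_const
    apply ContinuousOn.inv₀ ((continuous_id.sub continuous_const).continuousOn)
    intro z hz
    exact sph_ne (by simpa using mem_sphere_zero_iff_norm.mp hz) hp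
  have hi2 : CircleIntegrable (fun z => B * (z - p₁)⁻¹) 0 1 := by
    apply ContinuousOn.circleIntegrable zero_le_one
    apply ContinuousOn.mul continuousOn_const
    apply ContinuousOn.inv₀ ((continuous_id.sub continuous_const).continuousOn)
    intro z hz
    exact sph_ne (by simpa using mem_sphere_zero_iff_norm.mp hz) hp₁
  have hi3 : CircleIntegrable hh 0 1 := by
    apply ContinuousOn.circleIntegrable zero_le_one
    rw [hhh]
    apply ContinuousOn.div
    · exact ((continuous_const.mul continuous_id).add continuous_const).continuousOn
    · exact (((continuous_const.sub (continuous_const.mul continuous_id))).mul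
        ((continuous_const.sub (continuous_const.mul continuous_id)))).continuousOn
    · intro z hz
      have hz1 : ‖z‖ = 1 := by
        simpa using mem_sphere_zero_iff_norm.mp hz
      exact mul_ne_zero (key_ne q z hqabs hz1.le) (key_ne q₁ z hq₁abs hz1.le)
  have hi23 : CircleIntegrable (fun z => B * (z - p₁)⁻¹ + hh z) 0 1 := hi2.add hi3
  have heq : Set.EqOn g₀ (fun z => A * (z - p)⁻¹ + (B * (z - p₁)⁻¹ + hh z)) (sphere 0 1) := by
    intro z hz
    have hz1 : ‖z‖ = 1 := by
      simpa using mem_sphere_zero_iff_norm.mp hz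
    have hzp : z - p ≠ 0 := sph_ne hz1 hp
    have hzp₁ : z - p₁ ≠ 0 := sph_ne hz1 hp₁
    have hqz : 1 - q * z ≠ 0 := key_ne q z hqabs hz1.le
    have hq₁z : 1 - q₁ * z ≠ 0 := key_ne q₁ z hq₁abs hz1.le
    simp only [hg₀, hhh]
    rw [split_lemma A B CC DD p p₁ q q₁ z hzp hqz hzp₁ hq₁z, key z]
  have hO1 : (∮ z in C(0, 1), A * (z - p)⁻¹) = A * (2 * Real.pi * I) := by
    have h2 := circleIntegral.integral_sub_inv_of_mem_ball
      (show p ∈ ball (0:ℂ) 1 by simpa using hp)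
    have h1 := circleIntegral.integral_smul A (fun z => (z - p)⁻¹) 0 1
    simp only [smul_eq_mul] at h1
    rw [h1, h2]
  have hO2 : (∮ z in C(0, 1), B * (z - p₁)⁻¹) = B * (2 * Real.pi * I) := by
    have h2 := circleIntegral.integral_sub_inv_of_mem_ball
      (show p₁ ∈ ball (0:ℂ) 1 by simpa using hp₁)
    have h1 := circleIntegral.integral_smul B (fun z => (z - p₁)⁻¹) 0 1
    simp only [smul_eq_mul] at h1
    rw [h1, h2]
  have hO3 : (∮ z in C(0, 1), hh z) = 0 := by
    apply circleIntegral_eq_zero_of_differentiable_on_off_countable zero_le_one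
      Set.countable_empty
    · rw [hhh]
      apply ContinuousOn.div
      · exact ((continuous_const.mul continuous_id).add continuous_const).continuousOn
      · exact (((continuous_const.sub (continuous_const.mul continuous_id))).mul
          ((continuous_const.sub (continuous_const.mul continuous_id)))).continuousOn
      · intro z hz
        have hz1 : ‖z‖ ≤ 1 := by
          simpa using mem_closedBall_zero_iff.mp hz
        exact mul_ne_zero (key_ne q z hqabs hz1) (key_ne q₁ z hq₁abs hz1)
    · intro z hz
      have hz1 : ‖z‖ ≤ 1 := by
        have h' := mem_ball_zero_iff.mp hz.1
        linarith
      rw [hhh]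
      apply DifferentiableAt.div
      · exact ((differentiableAt_const _).mul differentiableAt_id).add (differentiableAt_const _)
      · exact ((differentiableAt_const _).sub ((differentiableAt_const _).mul
          differentiableAt_id)).mul ((differentiableAt_const _).sub
          ((differentiableAt_const _).mul differentiableAt_id))
      · exact mul_ne_zero (key_ne q z hqabs hz1) (key_ne q₁ z hq₁abs hz1)
  have hO : (∮ z in C(0, 1), g₀ z) = 2 * Real.pi * I * (A + B) := by
    rw [circleIntegral.integral_congr zero_le_one heq, circleIntegral_add' hi1 hi23,
      circleIntegral_add' hi2 hi3, hO1, hO2, hO3]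
    ring
  have hpt : ∀ t : ℝ, deriv (circleMap 0 1) t • g₀ (circleMap 0 1 t)
      = I * (((1 / ((‖Complex.exp (t * Complex.I) - p‖) ^ 2 *
             (‖Complex.exp (t * Complex.I) - p₁‖) ^ 2)) : ℝ) : ℂ) := by
    intro t
    have hzt : circleMap 0 1 t = Complex.exp (t * I) := by simp [circleMap]
    rw [deriv_circleMap, hzt]
    have hz1 : ‖Complex.exp (t * I)‖ = 1 := by simp [Complex.norm_exp]
    set z := Complex.exp (t * I) with hz
    have hz0 : z ≠ 0 := Complex.exp_ne_zero _
    have hzz : z * (starRingEnd ℂ) z = 1 := by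
      rw [Complex.mul_conj, Complex.normSq_eq_norm_sq, hz1]
      simp
    have hzp : z - p ≠ 0 := sph_ne hz1 hp
    have hzp₁ : z - p₁ ≠ 0 := sph_ne hz1 hp₁
    have hqz : 1 - q * z ≠ 0 := key_ne q z hqabs hz1.le
    have hq₁z : 1 - q₁ * z ≠ 0 := key_ne q₁ z hq₁abs hz1.le
    have e1 : ((‖z - p‖ : ℝ) : ℂ) ^ 2 = (z - p) * (1 - q * z) / z := by
      rw [habs2, map_sub, ← hq, eq_div_iff hz0]
      linear_combination (z - p) * hzz
    have e2 : ((‖z - p₁‖ : ℝ) : ℂ) ^ 2 = (z - p₁) * (1 - q₁ * z) / z := by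
      rw [habs2, map_sub, ← hq₁, eq_div_iff hz0]
      linear_combination (z - p₁) * hzz
    push_cast
    rw [e1, e2]
    simp only [smul_eq_mul, hg₀]
    field_simp
  have hJ : (I : ℂ) * ((∫ t in (0:ℝ)..(2 * Real.pi),
        1 / ((‖Complex.exp (t * Complex.I) - p‖) ^ 2 *
             (‖Complex.exp (t * Complex.I) - p₁‖) ^ 2) : ℝ) : ℂ)
      = ∮ z in C(0, 1), g₀ z := by
    rw [← intervalIntegral.integral_ofReal, ← intervalIntegral.integral_const_mul]
    unfold circleIntegral
    exact (intervalIntegral.integral_congr fun t _ => hpt t).symm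
  have hRHS : ((2 * Real.pi * (1 - (‖p‖) ^ 2 * (‖p₁‖) ^ 2) /
          ((1 - (‖p‖) ^ 2) * (1 - (‖p₁‖) ^ 2) *
           (‖1 - p * q₁‖) ^ 2) : ℝ) : ℂ)
      = 2 * Real.pi * (A + B) := by
    have hc : (starRingEnd ℂ) (1 - p * q₁) = 1 - q * p₁ := by
      rw [map_sub, map_one, map_mul, ← hq, hq₁, Complex.conj_conj]
    push_cast
    rw [habs2, habs2, habs2, hc, ← hq, ← hq₁, hA, hB,
      ABsum p p₁ q q₁ hqp hq₁p₁ hq₁p hqp₁ hpq₁ hpq hp₁q₁ hpp₁ hp₁p, mul_div_assoc]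
  rw [← Complex.ofReal_inj, hRHS]
  apply mul_left_cancel₀ Complex.I_ne_zero
  rw [hJ, hO]
  ring
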